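/- arXiv:0912.0586 — 2 statements merged into one kernel-verified Lean document; each statement's English description precedes it below -/
import Mathlib

section
/- Let x ∈ W, let i = (i₁,…,i_m) be a reduced word for the longest element w₀, and define v_l^i ∈ W by v_m^i = e and v_{l−1}^i = s_{i_l} v_l^i if l appears in the lexicographically minimal element of S(x w₀, i), and v_{l−1}^i = v_l^i otherwise. If l appears in min S(x w₀, i), then ℓ(v_{l−1}^i) = ℓ(v_l^i) + 1. -/
/-- Minimal length of a word in the generators `s` expressing `x`. -/
noncomputable def wordLength {I W : Type*} [Monoid W] (s : I → W) (x : W) : ℕ :=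
  sInf {n | ∃ il : List I, il.length = n ∧ (il.map s).prod = x}

/-- `il` is a reduced word for `x` in the generators `s`. -/
def IsReducedWord {I W : Type*} [Monoid W] (s : I → W) (x : W) (il : List I) : Prop :=
  (il.map s).prod = x ∧ il.length = wordLength s x

/-- The (strong) Bruhat order, via the subword property: `y ≤ x` iff some reduced
word for `x` admits a subword whose product is `y`. -/
def BruhatLE {I W : Type*} [Monoid W] (s : I → W) (y x : W) : Prop :=
  ∃ il : List I, IsReducedWord s x il ∧ ∃ sub : List I, sub.Sublist il ∧ (sub.map s).prod = y

/-- `wl s il l` is `s_{i₁} ⋯ s_{i_l}`, the product of the first `l` letters of `il`. -/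
def wl {I W : Type*} [Monoid W] (s : I → W) (il : List I) (l : ℕ) : W :=
  ((il.take l).map s).prod

/-- Membership in the set `S(x w₀, 𝐢)` of increasing position sequences (1-based)
giving reduced subword expressions of `xw0` inside the word `il`. -/
def MemS {I W : Type*} [Monoid W] (s : I → W) (d : I) (xw0 : W) (il : List I)
    (A : List ℕ) : Prop :=
  List.Pairwise (· < ·) A ∧ (∀ a ∈ A, 1 ≤ a ∧ a ≤ il.length) ∧
    A.length = wordLength s xw0 ∧ (A.map (fun a => s (il.getD (a - 1) d))).prod = xw0

/-- `A` is the lexicographically minimal element of `S(x w₀, 𝐢)`. -/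
def IsMinS {I W : Type*} [Monoid W] (s : I → W) (d : I) (xw0 : W) (il : List I)
    (A : List ℕ) : Prop :=
  MemS s d xw0 il A ∧ ∀ B : List ℕ, MemS s d xw0 il B → ¬ List.Lex (· < ·) B A

/-- The element `y_l^𝐢 ∈ W` defined by the downward recursion `y_m = e`,
`y_{l-1} = y_l` if `l` appears in `A = min S(x w₀, 𝐢)`, and
`y_{l-1} = s_{β_l} y_l` otherwise, where `s_{β_l} = w_{l-1} s_{i_l} w_{l-1}⁻¹`. -/
def yVal {I W : Type*} [Group W] (s : I → W) (d : I) (il : List I) (A : List ℕ)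
    (l : ℕ) : W :=
  ((List.range' (l + 1) (il.length - l)).map
    (fun t => if t ∈ A then 1 else
      wl s il (t - 1) * s (il.getD (t - 1) d) * (wl s il (t - 1))⁻¹)).prod

/-- The element `v_l^𝐢 ∈ W` defined by the downward recursion `v_m = e`,
`v_{l-1} = s_{i_l} v_l` if `l` appears in `A = min S(x w₀, 𝐢)`, and
`v_{l-1} = v_l` otherwise. -/
def vVal {I W : Type*} [Monoid W] (s : I → W) (d : I) (il : List I) (A : List ℕ)
    (l : ℕ) : W :=
  ((List.range' (l + 1) (il.length - l)).map
    (fun t => if t ∈ A then s (il.getD (t - 1) d) else 1)).prod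


private lemma wordLength_le_length {I W : Type*} [Monoid W] (s : I → W) (u : List I) :
    wordLength s (u.map s).prod ≤ u.length :=
  Nat.sInf_le ⟨u, rfl, rfl⟩

private lemma exists_min_word {I W : Type*} [Monoid W] (s : I → W) (u : List I) :
    ∃ v : List I, (v.map s).prod = (u.map s).prod ∧
      v.length = wordLength s (u.map s).prod := by
  have h : wordLength s (u.map s).prod ∈
      {n | ∃ il : List I, il.length = n ∧ (il.map s).prod = (u.map s).prod} :=
    Nat.sInf_mem ⟨u.length, u, rfl, rfl⟩
  obtain ⟨v, h1, h2⟩ := h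
  exact ⟨v, h2, h1⟩

private lemma wordLength_mul_le {I W : Type*} [Monoid W] (s : I → W) (u v : List I) :
    wordLength s ((u.map s).prod * (v.map s).prod) ≤
      wordLength s (u.map s).prod + wordLength s (v.map s).prod := by
  obtain ⟨u', hu1, hu2⟩ := exists_min_word s u
  obtain ⟨v', hv1, hv2⟩ := exists_min_word s v
  have h : ((u' ++ v').map s).prod = (u.map s).prod * (v.map s).prod := by
    simp [hu1, hv1]
  have := wordLength_le_length s (u' ++ v')
  rw [h] at this
  simpa [hu2, hv2] using this

/-- A suffix of a reduced word is reduced. -/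
private lemma suffix_reduced {I W : Type*} [Monoid W] (s : I → W) (u v : List I)
    (h : (u ++ v).length = wordLength s ((u ++ v).map s).prod) :
    wordLength s (v.map s).prod = v.length := by
  have h1 : wordLength s (v.map s).prod ≤ v.length := wordLength_le_length s v
  have h2 := wordLength_mul_le s u v
  have h3 : ((u ++ v).map s).prod = (u.map s).prod * (v.map s).prod := by simp
  rw [h3, List.length_append] at h
  have h4 := wordLength_le_length s u
  omega

private lemma prod_map_ite {W : Type*} [Monoid W] (A R : List ℕ) (f : ℕ → W) :
    (R.map (fun t => if t ∈ A then f t else 1)).prod =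
      ((R.filter (fun t => t ∈ A)).map f).prod := by
  induction R with
  | nil => simp
  | cons a R ih =>
    by_cases h : a ∈ A <;> simp [h, ih, List.filter_cons]

/-- If `l` appears in the lexicographically minimal element of `S(x w₀, 𝐢)`, then
`ℓ(v_{l-1}^𝐢) = ℓ(v_l^𝐢) + 1`. -/
theorem vVal_length_succ {I W : Type*} [Group W] (s : I → W) (d : I)
    (hinv : ∀ i, s i * s i = 1)
    (hgen : ∀ w : W, ∃ il : List I, (il.map s).prod = w)
    (w0 : W) (hlong : ∀ w : W, wordLength s w ≤ wordLength s w0)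
    (x : W) (il : List I) (hred : IsReducedWord s w0 il)
    (A : List ℕ) (hA : IsMinS s d (x * w0) il A)
    (l : ℕ) (hl1 : 1 ≤ l) (hl2 : l ≤ il.length) (hmem : l ∈ A) :
    wordLength s (vVal s d il A (l - 1)) = wordLength s (vVal s d il A l) + 1 := by
  classical
  obtain ⟨⟨hsort, hbound, hlen, hprod⟩, -⟩ := hA
  obtain ⟨u, v, huv⟩ := List.append_of_mem hmem
  subst huv
  set g : ℕ → I := fun a => il.getD (a - 1) d with hg
  -- bounds and comparisons from sortedness
  have hpw := hsort
  rw [List.pairwise_append] at hpw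
  obtain ⟨hu_sorted, hlv_sorted, hcross⟩ := hpw
  have hlv : ∀ a ∈ v, l < a := (List.pairwise_cons.mp hlv_sorted).1
  have hul : ∀ a ∈ u, a < l := fun a ha => hcross a ha l List.mem_cons_self
  have hbA : ∀ a ∈ u ++ l :: v, 1 ≤ a ∧ a ≤ il.length := hbound
  -- identify vVal l with the product over v
  have key : ∀ (k : ℕ) (w : List ℕ), (∀ a ∈ w, k < a ∧ a ≤ il.length) →
      List.Pairwise (· < ·) w → (∀ a, a ∈ u ++ l :: v → k < a → a ∈ w) →
      (∀ a ∈ w, a ∈ u ++ l :: v) → k ≤ il.length →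
      vVal s d il (u ++ l :: v) k = ((w.map g).map s).prod := by
    intro k w hwb hws hw1 hw2 hk
    have hfil : (List.range' (k + 1) (il.length - k)).filter
        (fun t => t ∈ u ++ l :: v) = w := by
      refine List.Perm.eq_of_pairwise (fun a b _ _ h1 h2 => absurd (h1.trans h2) (lt_irrefl a)) ?_ hws ?_
      swap
      · rw [List.perm_ext_iff_of_nodup
          ((List.nodup_range').filter _) hws.nodup]
        intro a
        simp only [List.mem_filter, List.mem_range'_1, decide_eq_true_eq]
        constructor
        · rintro ⟨⟨h1, h2⟩, h3⟩
          exact hw1 a h3 (by omega)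
        · intro ha
          refine ⟨⟨by have := (hwb a ha).1; omega, ?_⟩, hw2 a ha⟩
          have := (hwb a ha).2
          omega
      · exact (List.pairwise_lt_range').filter _
    rw [vVal, prod_map_ite, hfil, List.map_map]
    rfl
  have hVl : vVal s d il (u ++ l :: v) l = ((v.map g).map s).prod := by
    apply key
    · exact fun a ha => ⟨hlv a ha, (hbA a (by simp [ha])).2⟩
    · exact (List.pairwise_cons.mp hlv_sorted).2
    · intro a ha hla
      rcases List.mem_append.mp ha with h | h
      · exact absurd (hul a h) (by omega)
      · rcases List.mem_cons.mp h with h | h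
        · omega
        · exact h
    · exact fun a ha => by simp [ha]
    · exact hl2
  have hVl1 : vVal s d il (u ++ l :: v) (l - 1) = (((l :: v).map g).map s).prod := by
    apply key
    · intro a ha
      refine ⟨?_, (hbA a (by simp [ha])).2⟩
      rcases List.mem_cons.mp ha with h | h
      · omega
      · have := hlv a h; omega
    · exact hlv_sorted
    · intro a ha hla
      rcases List.mem_append.mp ha with h | h
      · have := hul a h; have := (hbA a (by simp [h])).1; omega
      · exact h
    · exact fun a ha => by simp [ha]
    · omega
  -- the word from A is reduced, so its suffixes are reduced
  have hword : (((u ++ l :: v).map g).map s).prod = x * w0 := by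
    rw [List.map_map]; exact hprod
  have hAred : ((u.map g) ++ (l :: v).map g).length =
      wordLength s ((((u.map g) ++ (l :: v).map g).map s).prod) := by
    rw [← List.map_append, hword]
    simpa using hlen
  have h1 : wordLength s ((((l :: v).map g).map s).prod) = ((l :: v).map g).length :=
    suffix_reduced s (u.map g) ((l :: v).map g) hAred
  have h2 : wordLength s (((v.map g).map s).prod) = (v.map g).length := by
    have : ((u.map g ++ [g l]) ++ v.map g).length =
        wordLength s (((u.map g ++ [g l]) ++ v.map g).map s).prod := by
      have he : (u.map g ++ [g l]) ++ v.map g = u.map g ++ (l :: v).map g := by simp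
      rw [he]; exact hAred
    exact suffix_reduced s (u.map g ++ [g l]) (v.map g) this
  rw [hVl, hVl1, h1, h2]
  simp
end

section
/- With y_l^i ∈ W defined by y_m^i = e and y_{l−1}^i = y_l^i if l appears in min S(x w₀, i), y_{l−1}^i = s_{β_l^i} y_l^i otherwise (where β_l^i = w_{l−1}^i · α_{i_l}), and v_l^i as defined via the complementary rule, one has y_l^i = w_l^i · v_l^i · w₀⁻¹ for every 0 ≤ l ≤ m. -/
/-- One has `y_l^𝐢 = w_l^𝐢 · v_l^𝐢 · w₀⁻¹` for every `0 ≤ l ≤ m`. -/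
theorem yVal_eq_wl_vVal {I W : Type*} [Group W] (s : I → W) (d : I)
    (hinv : ∀ i, s i * s i = 1)
    (hgen : ∀ w : W, ∃ il : List I, (il.map s).prod = w)
    (w0 : W) (hlong : ∀ w : W, wordLength s w ≤ wordLength s w0)
    (x : W) (il : List I) (hred : IsReducedWord s w0 il)
    (A : List ℕ) (hA : IsMinS s d (x * w0) il A) :
    ∀ l ≤ il.length, yVal s d il A l = wl s il l * vVal s d il A l * w0⁻¹ := by
  have hw0 : wl s il il.length = w0 := by
    simpa [wl, List.take_length] using hred.1
  intro l hl
  obtain ⟨j, hj⟩ : ∃ j, l + j = il.length := ⟨il.length - l, by omega⟩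
  clear hl
  induction j generalizing l with
  | zero =>
    have : l = il.length := by omega
    subst this
    simp [yVal, vVal, hw0]
  | succ j ih =>
    have hlt : l < il.length := by omega
    have h1 := ih (l + 1) (by omega)
    have hr1 : il.length - l = j + 1 := by omega
    have hr2 : il.length - (l + 1) = j := by omega
    have hwl : wl s il (l + 1) = wl s il l * s (il.getD l d) := by
      have h := List.prod_take_succ (il.map s) l (by simpa using hlt)
      simp only [wl, List.map_take]
      rw [h, List.getElem_map, List.getD_eq_getElem il d hlt]
    have hy : yVal s d il A l =
        (if l + 1 ∈ A then 1 else
          wl s il l * s (il.getD l d) * (wl s il l)⁻¹) * yVal s d il A (l + 1) := by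
      simp only [yVal, hr1, hr2, List.range'_succ, List.map_cons, List.prod_cons,
        Nat.add_sub_cancel]
    have hv : vVal s d il A l =
        (if l + 1 ∈ A then s (il.getD l d) else 1) * vVal s d il A (l + 1) := by
      simp only [vVal, hr1, hr2, List.range'_succ, List.map_cons, List.prod_cons,
        Nat.add_sub_cancel]
    rw [hy, hv, h1]
    by_cases hmem : l + 1 ∈ A
    · simp only [hmem, if_true, one_mul, hwl]
      group
    · simp only [hmem, if_false, mul_one]
      rw [hwl]
      have key : wl s il l * s (il.getD l d) * (wl s il l)⁻¹ *
          (wl s il l * s (il.getD l d) * vVal s d il A (l + 1) * w0⁻¹)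
          = wl s il l * (s (il.getD l d) * s (il.getD l d)) *
            (vVal s d il A (l + 1) * w0⁻¹) := by group
      rw [key, hinv, one_mul, mul_one, mul_assoc]
end
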